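/- arXiv:1409.4742 — 4 statements merged into one kernel-verified Lean document; each statement's English description precedes it below -/
import Mathlib

section
/- Euler's ratio-sum relation (algebraic core): if real numbers α, β, γ and P, Q, R > 0 satisfy γR = P + Q, αP = Q + R, βQ = R + P, then αβγ = α + β + γ + 2. -/
/-- Algebraic core of Euler's ratio-sum relation. -/
theorem euler_ratio_sum_algebraic (α β γ P Q R : ℝ)
    (hP : 0 < P) (hQ : 0 < Q) (hR : 0 < R)
    (h1 : γ * R = P + Q) (h2 : α * P = Q + R) (h3 : β * Q = R + P) :
    α * β * γ = α + β + γ + 2 := by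
  have hkey : (α * β * γ) * (P * Q * R) = (α + β + γ + 2) * (P * Q * R) := by
    have e : (α * P) * (β * Q) * (γ * R) = (Q + R) * (R + P) * (P + Q) := by
      rw [h1, h2, h3]
    nlinarith [e, h1, h2, h3, mul_pos hP hQ, mul_pos hQ hR, mul_pos hR hP]
  have hpos : (0:ℝ) < P * Q * R := by positivity
  exact mul_right_cancel₀ (ne_of_gt hpos) hkey
end

section
/- Euler's ratio-sum theorem for Euclidean triangles: if D, E, F lie on sides BC, CA, AB of a triangle ABC, and the cevians AD, BE, CF meet at a common interior point O, then (AO/OD)·(BO/OE)·(CO/OF) = AO/OD + BO/OE + CO/OF + 2. -/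
open EuclideanGeometry

private lemma seg_param (P Q R : EuclideanSpace ℝ (Fin 2)) (h : R ∈ segment ℝ P Q) :
    ∃ t : ℝ, 0 ≤ t ∧ t ≤ 1 ∧ R = P + t • (Q - P) ∧
      dist P R = t * dist P Q ∧ dist R Q = (1 - t) * dist P Q := by
  obtain ⟨a, b, ha, hb, hab, hx⟩ := h
  refine ⟨b, hb, by linarith, ?_, ?_, ?_⟩
  · rw [← hx]; have : a = 1 - b := by linarith
    rw [this]; module
  · have hPR : P - R = b • (P - Q) := by
      rw [← hx]; have : a = 1 - b := by linarith
      rw [this]; module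
    rw [dist_eq_norm, hPR, norm_smul, Real.norm_eq_abs, abs_of_nonneg hb, ← dist_eq_norm]
  · have hRQ : R - Q = (1 - b) • (P - Q) := by
      rw [← hx]; have : a = 1 - b := by linarith
      rw [this]; module
    rw [dist_eq_norm, hRQ, norm_smul, Real.norm_eq_abs, abs_of_nonneg (by linarith : (0:ℝ) ≤ 1 - b), ← dist_eq_norm]

private lemma indep_coeffs (A B C : EuclideanSpace ℝ (Fin 2))
    (h : AffineIndependent ℝ ![A, B, C]) (c₁ c₂ : ℝ)
    (hc : c₁ • (B - A) + c₂ • (C - A) = 0) : c₁ = 0 ∧ c₂ = 0 := by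
  rw [affineIndependent_iff] at h
  have hsum : ∑ i : Fin 3, ![-(c₁ + c₂), c₁, c₂] i = 0 := by
    simp [Fin.sum_univ_three]
  have hvec : ∑ i : Fin 3, ![-(c₁ + c₂), c₁, c₂] i • ![A, B, C] i = 0 := by
    simp only [Fin.sum_univ_three, Matrix.cons_val_zero, Matrix.cons_val_one, Matrix.head_cons,
      Matrix.cons_val_two, Matrix.tail_cons]
    have : -(c₁ + c₂) • A + c₁ • B + c₂ • C = c₁ • (B - A) + c₂ • (C - A) := by module
    rw [this, hc]
  have h1 := h Finset.univ ![-(c₁ + c₂), c₁, c₂] hsum hvec 1 (Finset.mem_univ _)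
  have h2 := h Finset.univ ![-(c₁ + c₂), c₁, c₂] hsum hvec 2 (Finset.mem_univ _)
  simpa using ⟨h1, h2⟩

private lemma pos_aux {t d : ℝ} (h : 0 < t * d) (hd : 0 ≤ d) : 0 < t ∧ 0 < d := by
  rcases hd.lt_or_eq with h' | h'
  · exact ⟨by nlinarith, h'⟩
  · exfalso; rw [← h'] at h; simp at h

private lemma algebra_aux {t s r : ℝ} (ht0 : 0 < t) (ht1 : t < 1) (hs0 : 0 < s) (hs1 : s < 1)
    (hr0 : 0 < r) (hr1 : r < 1) (h : (1 - s) + (1 - r) = t) :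
    t / (1 - t) * (s / (1 - s)) * (r / (1 - r)) =
      t / (1 - t) + s / (1 - s) + r / (1 - r) + 2 := by
  have h1 : (1:ℝ) - t ≠ 0 := by linarith
  have h2 : (1:ℝ) - s ≠ 0 := by linarith
  have h3 : (1:ℝ) - r ≠ 0 := by linarith
  field_simp
  ring_nf
  nlinarith [h, sq_nonneg t, sq_nonneg s, sq_nonneg r]

/-- Euler's ratio-sum theorem for Euclidean triangles: if cevians `AD`, `BE`, `CF`
of a triangle `ABC` meet at a common point `O`, then
`(AO/OD)(BO/OE)(CO/OF) = AO/OD + BO/OE + CO/OF + 2`. -/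
theorem euler_ratio_sum_euclidean
    (A B C D E F O : EuclideanSpace ℝ (Fin 2))
    (hABC : AffineIndependent ℝ ![A, B, C])
    (hD : D ∈ segment ℝ B C) (hE : E ∈ segment ℝ C A) (hF : F ∈ segment ℝ A B)
    (hOD : O ∈ segment ℝ A D) (hOE : O ∈ segment ℝ B E) (hOF : O ∈ segment ℝ C F)
    (hAO : 0 < dist A O) (hOD' : 0 < dist O D)
    (hBO : 0 < dist B O) (hOE' : 0 < dist O E)
    (hCO : 0 < dist C O) (hOF' : 0 < dist O F) :
    (dist A O / dist O D) * (dist B O / dist O E) * (dist C O / dist O F) =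
      dist A O / dist O D + dist B O / dist O E + dist C O / dist O F + 2 := by
  obtain ⟨u, hu0, hu1, hDeq, -, -⟩ := seg_param B C D hD
  obtain ⟨v, hv0, hv1, hEeq, -, -⟩ := seg_param C A E hE
  obtain ⟨w, hw0, hw1, hFeq, -, -⟩ := seg_param A B F hF
  obtain ⟨t, ht0, ht1, hOt, hdAO, hdOD⟩ := seg_param A D O hOD
  obtain ⟨s, hs0, hs1, hOs, hdBO, hdOE⟩ := seg_param B E O hOE
  obtain ⟨r, hr0, hr1, hOr, hdCO, hdOF⟩ := seg_param C F O hOF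
  rw [hdAO] at hAO
  rw [hdOD] at hOD'
  rw [hdBO] at hBO
  rw [hdOE] at hOE'
  rw [hdCO] at hCO
  rw [hdOF] at hOF'
  have hnAD : (0:ℝ) ≤ dist A D := dist_nonneg
  have hnBE : (0:ℝ) ≤ dist B E := dist_nonneg
  have hnCF : (0:ℝ) ≤ dist C F := dist_nonneg
  obtain ⟨ht0', hdAD⟩ := pos_aux hAO hnAD
  obtain ⟨ht1'', -⟩ := pos_aux hOD' hnAD
  obtain ⟨hs0', hdBE⟩ := pos_aux hBO hnBE
  obtain ⟨hs1'', -⟩ := pos_aux hOE' hnBE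
  obtain ⟨hr0', hdCF⟩ := pos_aux hCO hnCF
  obtain ⟨hr1'', -⟩ := pos_aux hOF' hnCF
  have ht1' : t < 1 := by linarith
  have hs1' : s < 1 := by linarith
  have hr1' : r < 1 := by linarith
  -- the three expressions for O - A
  have rep1 : O - A = (t * (1 - u)) • (B - A) + (t * u) • (C - A) := by
    rw [hOt, hDeq]; module
  have rep2 : O - A = (1 - s) • (B - A) + (s * (1 - v)) • (C - A) := by
    rw [hOs, hEeq]; module
  have rep3 : O - A = (r * w) • (B - A) + (1 - r) • (C - A) := by
    rw [hOr, hFeq]; module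
  have e12 : (t * (1 - u) - (1 - s)) • (B - A) + (t * u - s * (1 - v)) • (C - A) = 0 := by
    have h := rep1.symm.trans rep2
    linear_combination (norm := module) h
  have e13 : (t * (1 - u) - r * w) • (B - A) + (t * u - (1 - r)) • (C - A) = 0 := by
    have h := rep1.symm.trans rep3
    linear_combination (norm := module) h
  obtain ⟨q1, q2⟩ := indep_coeffs A B C hABC _ _ e12
  obtain ⟨q3, q4⟩ := indep_coeffs A B C hABC _ _ e13
  -- now pure algebra
  rw [hdAO, hdOD, hdBO, hdOE, hdCO, hdOF]
  rw [mul_div_mul_right _ _ (ne_of_gt hdAD), mul_div_mul_right _ _ (ne_of_gt hdBE),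
    mul_div_mul_right _ _ (ne_of_gt hdCF)]
  have hbc : (1 - s) + (1 - r) = t := by linear_combination -q1 - q4
  exact algebra_aux ht0' ht1' hs0' hs1' hr0' hr1' hbc
end

section
/- Hyperbolic Ceva theorem: if cevians AD, BE, CF of a hyperbolic triangle ABC (with D on BC, E on CA, F on AB) meet at a common interior point, then (sinh DB / sinh DC) · (sinh EC / sinh EA) · (sinh FA / sinh FB) = 1. -/
open Real UpperHalfPlane

/-- `Y` lies strictly between `X` and `Z` on the geodesic segment `XZ`
in the hyperbolic plane. -/
def HypBtw (X Y Z : UpperHalfPlane) : Prop :=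
  Y ≠ X ∧ Y ≠ Z ∧ dist X Y + dist Y Z = dist X Z


noncomputable def hL0 (z : UpperHalfPlane) : ℝ := z.re / z.im
noncomputable def hL1 (z : UpperHalfPlane) : ℝ := (z.re ^ 2 + z.im ^ 2 - 1) / (2 * z.im)
noncomputable def hL2 (z : UpperHalfPlane) : ℝ := (z.re ^ 2 + z.im ^ 2 + 1) / (2 * z.im)

lemma hL2_pos (z : UpperHalfPlane) : 0 < hL2 z := by
  have := z.im_pos; unfold hL2; positivity

lemma hQ_self (z : UpperHalfPlane) : hL2 z ^ 2 - hL0 z ^ 2 - hL1 z ^ 2 = 1 := by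
  have hz := z.im_pos.ne'
  unfold hL0 hL1 hL2; field_simp; ring

lemma hQ_dist (z w : UpperHalfPlane) :
    hL2 z * hL2 w - hL0 z * hL0 w - hL1 z * hL1 w = Real.cosh (dist z w) := by
  rw [UpperHalfPlane.cosh_dist]
  have hsq : dist (z : ℂ) (w : ℂ) ^ 2 = (z.re - w.re) ^ 2 + (z.im - w.im) ^ 2 := by
    rw [Complex.dist_eq_re_im, Real.sq_sqrt (by positivity)]
    simp [UpperHalfPlane.coe_re, UpperHalfPlane.coe_im]
  rw [hsq]
  have hz := z.im_pos.ne'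
  have hw := w.im_pos.ne'
  unfold hL0 hL1 hL2; field_simp; ring

lemma hnull (w0 w1 w2 x0 x1 x2 : ℝ)
    (hWW : w2 ^ 2 - w0 ^ 2 - w1 ^ 2 = 0)
    (hWX : w2 * x2 - w0 * x0 - w1 * x1 = 0)
    (hx : x2 ^ 2 - x0 ^ 2 - x1 ^ 2 = 1) :
    w0 = 0 ∧ w1 = 0 ∧ w2 = 0 := by
  have e : w0 * x0 + w1 * x1 = w2 * x2 := by linarith
  have e2 : (w0 * x0 + w1 * x1) ^ 2 = w2 ^ 2 * x2 ^ 2 := by rw [e]; ring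
  have a1 : w0 ^ 2 + w1 ^ 2 = w2 ^ 2 := by linarith
  have b1 : x0 ^ 2 + x1 ^ 2 = x2 ^ 2 - 1 := by linarith
  have e3 : (w0 ^ 2 + w1 ^ 2) * (x0 ^ 2 + x1 ^ 2) = w2 ^ 2 * (x2 ^ 2 - 1) := by
    rw [a1, b1]
  have h2 : w2 ^ 2 ≤ 0 := by nlinarith [sq_nonneg (w0 * x1 - w1 * x0), e2, e3]
  have hw2z : w2 = 0 := by nlinarith [sq_nonneg w2]
  refine ⟨?_, ?_, hw2z⟩ <;> nlinarith [sq_nonneg w0, sq_nonneg w1]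

lemma hkey (x0 x1 x2 y0 y1 y2 z0 z1 z2 su cu sv cv : ℝ)
    (hx : x2 ^ 2 - x0 ^ 2 - x1 ^ 2 = 1) (hy : y2 ^ 2 - y0 ^ 2 - y1 ^ 2 = 1)
    (hz : z2 ^ 2 - z0 ^ 2 - z1 ^ 2 = 1)
    (hxy : x2 * y2 - x0 * y0 - x1 * y1 = cu)
    (hyz : y2 * z2 - y0 * z0 - y1 * z1 = cv)
    (hxz : x2 * z2 - x0 * z0 - x1 * z1 = cu * cv + su * sv)
    (hu : cu ^ 2 - su ^ 2 = 1) (hv : cv ^ 2 - sv ^ 2 = 1) :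
    sv * x0 + su * z0 = (su * cv + cu * sv) * y0 ∧
    sv * x1 + su * z1 = (su * cv + cu * sv) * y1 ∧
    sv * x2 + su * z2 = (su * cv + cu * sv) * y2 := by
  have hWW : (sv * x2 + su * z2 - (su * cv + cu * sv) * y2) ^ 2
      - (sv * x0 + su * z0 - (su * cv + cu * sv) * y0) ^ 2
      - (sv * x1 + su * z1 - (su * cv + cu * sv) * y1) ^ 2 = 0 := by
    linear_combination sv ^ 2 * hx + su ^ 2 * hz + (su * cv + cu * sv) ^ 2 * hy +
      (2 * su * sv) * hxz - (2 * sv * (su * cv + cu * sv)) * hxy -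
      (2 * su * (su * cv + cu * sv)) * hyz - su ^ 2 * hv - sv ^ 2 * hu
  have hWX : (sv * x2 + su * z2 - (su * cv + cu * sv) * y2) * x2
      - (sv * x0 + su * z0 - (su * cv + cu * sv) * y0) * x0
      - (sv * x1 + su * z1 - (su * cv + cu * sv) * y1) * x1 = 0 := by
    linear_combination sv * hx + su * hxz - (su * cv + cu * sv) * hxy - sv * hu
  obtain ⟨h0, h1, h2⟩ := hnull _ _ _ _ _ _ hWW hWX hx
  exact ⟨by linarith, by linarith, by linarith⟩

lemma hcollinear {X Y Z : UpperHalfPlane} (h : dist X Y + dist Y Z = dist X Z) :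
    Real.sinh (dist Y Z) * hL0 X + Real.sinh (dist X Y) * hL0 Z
        = Real.sinh (dist X Z) * hL0 Y ∧
    Real.sinh (dist Y Z) * hL1 X + Real.sinh (dist X Y) * hL1 Z
        = Real.sinh (dist X Z) * hL1 Y ∧
    Real.sinh (dist Y Z) * hL2 X + Real.sinh (dist X Y) * hL2 Z
        = Real.sinh (dist X Z) * hL2 Y := by
  have hXZ : dist X Z = dist X Y + dist Y Z := h.symm
  rw [hXZ, Real.sinh_add]
  have hxz := hQ_dist X Z
  rw [hXZ, Real.cosh_add] at hxz
  exact hkey (hL0 X) (hL1 X) (hL2 X) (hL0 Y) (hL1 Y) (hL2 Y) (hL0 Z) (hL1 Z) (hL2 Z)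
    (Real.sinh (dist X Y)) (Real.cosh (dist X Y)) (Real.sinh (dist Y Z))
    (Real.cosh (dist Y Z)) (hQ_self X) (hQ_self Y) (hQ_self Z)
    (hQ_dist X Y) (hQ_dist Y Z) hxz
    (Real.cosh_sq_sub_sinh_sq _) (Real.cosh_sq_sub_sinh_sq _)

/-- cevian relation: `X`–`O'`–`D'` collinear, `Y`–`D'`–`Z` collinear. -/
lemma hcev {X O' D' Y Z : UpperHalfPlane}
    (h1 : dist X O' + dist O' D' = dist X D')
    (h2 : dist Y D' + dist D' Z = dist Y Z) :
    Real.sinh (dist Y Z) * Real.sinh (dist X D') * hL0 O'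
        = Real.sinh (dist Y Z) * Real.sinh (dist O' D') * hL0 X
          + Real.sinh (dist X O') * Real.sinh (dist D' Z) * hL0 Y
          + Real.sinh (dist X O') * Real.sinh (dist Y D') * hL0 Z ∧
    Real.sinh (dist Y Z) * Real.sinh (dist X D') * hL1 O'
        = Real.sinh (dist Y Z) * Real.sinh (dist O' D') * hL1 X
          + Real.sinh (dist X O') * Real.sinh (dist D' Z) * hL1 Y
          + Real.sinh (dist X O') * Real.sinh (dist Y D') * hL1 Z ∧
    Real.sinh (dist Y Z) * Real.sinh (dist X D') * hL2 O'
        = Real.sinh (dist Y Z) * Real.sinh (dist O' D') * hL2 X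
          + Real.sinh (dist X O') * Real.sinh (dist D' Z) * hL2 Y
          + Real.sinh (dist X O') * Real.sinh (dist Y D') * hL2 Z := by
  obtain ⟨t10, t11, t12⟩ := hcollinear h1
  obtain ⟨t20, t21, t22⟩ := hcollinear h2
  refine ⟨?_, ?_, ?_⟩
  · linear_combination (-Real.sinh (dist Y Z)) * t10 - Real.sinh (dist X O') * t20
  · linear_combination (-Real.sinh (dist Y Z)) * t11 - Real.sinh (dist X O') * t21
  · linear_combination (-Real.sinh (dist Y Z)) * t12 - Real.sinh (dist X O') * t22

lemma hindep {A B C : UpperHalfPlane}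
    (t1 : dist A B < dist A C + dist C B)
    (t2 : dist B C < dist B A + dist A C)
    (t3 : dist C A < dist C B + dist B A)
    {α β γ : ℝ}
    (e0 : α * hL0 A + β * hL0 B + γ * hL0 C = 0)
    (e1 : α * hL1 A + β * hL1 B + γ * hL1 C = 0)
    (e2 : α * hL2 A + β * hL2 B + γ * hL2 C = 0) :
    α = 0 ∧ β = 0 ∧ γ = 0 := by
  rw [dist_comm C B] at t1 t3
  rw [dist_comm B A] at t2 t3
  rw [dist_comm C A] at t3
  -- now: t1 : dist A B < dist A C + dist B C, t2 : dist B C < dist A B + dist A C,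
  --      t3 : dist A C < dist B C + dist A B
  set p := Real.cosh (dist A B) with hp
  set q := Real.cosh (dist A C) with hq
  set r := Real.cosh (dist B C) with hr
  have E1 : α + β * p + γ * q = 0 := by
    linear_combination hL2 A * e2 - hL0 A * e0 - hL1 A * e1 - α * hQ_self A -
      β * hQ_dist A B - γ * hQ_dist A C
  have E2 : α * p + β + γ * r = 0 := by
    linear_combination hL2 B * e2 - hL0 B * e0 - hL1 B * e1 - β * hQ_self B -
      α * hQ_dist A B - γ * hQ_dist B C
  have E3 : α * q + β * r + γ = 0 := by
    linear_combination hL2 C * e2 - hL0 C * e0 - hL1 C * e1 - γ * hQ_self C -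
      α * hQ_dist A C - β * hQ_dist B C
  have hdet : 0 < 1 + 2 * p * q * r - p ^ 2 - q ^ 2 - r ^ 2 := by
    have u1 : Real.cosh (dist B C) < Real.cosh (dist A C + dist A B) := by
      rw [Real.cosh_lt_cosh, abs_of_nonneg dist_nonneg,
        abs_of_nonneg (by positivity : (0:ℝ) ≤ dist A C + dist A B)]
      linarith
    have u2 : Real.cosh (dist A C - dist A B) < Real.cosh (dist B C) := by
      rw [Real.cosh_lt_cosh, abs_of_nonneg dist_nonneg, abs_sub_lt_iff]
      constructor <;> linarith
    rw [Real.cosh_add] at u1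
    rw [Real.cosh_sub] at u2
    nlinarith [mul_pos (sub_pos.2 u1) (sub_pos.2 u2),
      Real.cosh_sq_sub_sinh_sq (dist A C), Real.cosh_sq_sub_sinh_sq (dist A B)]
  have hdet' : (1 + 2 * p * q * r - p ^ 2 - q ^ 2 - r ^ 2) ≠ 0 := ne_of_gt hdet
  have hα : α * (1 + 2 * p * q * r - p ^ 2 - q ^ 2 - r ^ 2) = 0 := by
    linear_combination (1 - r ^ 2) * E1 + (q * r - p) * E2 + (p * r - q) * E3
  have hβ : β * (1 + 2 * p * q * r - p ^ 2 - q ^ 2 - r ^ 2) = 0 := by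
    linear_combination (q * r - p) * E1 + (1 - q ^ 2) * E2 + (p * q - r) * E3
  have hγ : γ * (1 + 2 * p * q * r - p ^ 2 - q ^ 2 - r ^ 2) = 0 := by
    linear_combination (p * r - q) * E1 + (p * q - r) * E2 + (1 - p ^ 2) * E3
  exact ⟨by rcases mul_eq_zero.1 hα with h | h; exact h; exact absurd h hdet',
    by rcases mul_eq_zero.1 hβ with h | h; exact h; exact absurd h hdet',
    by rcases mul_eq_zero.1 hγ with h | h; exact h; exact absurd h hdet'⟩

/-- Hyperbolic Ceva theorem: if the cevians `AD`, `BE`, `CF` of a nondegenerate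
hyperbolic triangle `ABC` meet at a common interior point `O`, then
`(sinh DB / sinh DC)(sinh EC / sinh EA)(sinh FA / sinh FB) = 1`. -/
theorem hyperbolic_ceva (A B C D E F O : UpperHalfPlane)
    (hnd : dist A B < dist A C + dist C B ∧ dist B C < dist B A + dist A C ∧
      dist C A < dist C B + dist B A)
    (hD : HypBtw B D C) (hE : HypBtw C E A) (hF : HypBtw A F B)
    (hOA : HypBtw A O D) (hOB : HypBtw B O E) (hOC : HypBtw C O F) :
    (Real.sinh (dist D B) / Real.sinh (dist D C)) *
      (Real.sinh (dist E C) / Real.sinh (dist E A)) *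
      (Real.sinh (dist F A) / Real.sinh (dist F B)) = 1 := by
  rw [dist_comm D B, dist_comm E C, dist_comm F A]
  -- positivity of the relevant distances
  have hdBD : 0 < dist B D := dist_pos.2 (Ne.symm hD.1)
  have hdDC : 0 < dist D C := dist_pos.2 hD.2.1
  have hdCE : 0 < dist C E := dist_pos.2 (Ne.symm hE.1)
  have hdEA : 0 < dist E A := dist_pos.2 hE.2.1
  have hdAF : 0 < dist A F := dist_pos.2 (Ne.symm hF.1)
  have hdFB : 0 < dist F B := dist_pos.2 hF.2.1
  have hdAO : 0 < dist A O := dist_pos.2 (Ne.symm hOA.1)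
  have hdBO : 0 < dist B O := dist_pos.2 (Ne.symm hOB.1)
  have hdCO : 0 < dist C O := dist_pos.2 (Ne.symm hOC.1)
  have hdBE : 0 < dist B E := by
    have h := hOB.2.2
    have := dist_nonneg (x := O) (y := E)
    linarith
  have hdCF : 0 < dist C F := by
    have h := hOC.2.2
    have := dist_nonneg (x := O) (y := F)
    linarith
  have n1 := hnd.1
  have n2 := hnd.2.1
  have n3 := hnd.2.2
  rw [dist_comm C B] at n1
  rw [dist_comm B A] at n2
  rw [dist_comm C A, dist_comm C B, dist_comm B A] at n3
  have hdCA : 0 < dist C A := by rw [dist_comm]; linarith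
  have hdAB : 0 < dist A B := by linarith
  -- cevian equations
  obtain ⟨eA0, eA1, eA2⟩ := hcev hOA.2.2 hD.2.2
  obtain ⟨eB0, eB1, eB2⟩ := hcev hOB.2.2 hE.2.2
  obtain ⟨eC0, eC1, eC2⟩ := hcev hOC.2.2 hF.2.2
  -- sinh abbreviations
  set sBC := Real.sinh (dist B C) with hsBC
  set sAD := Real.sinh (dist A D) with hsAD
  set sOD := Real.sinh (dist O D) with hsOD
  set sAO := Real.sinh (dist A O) with hsAO
  set sDC := Real.sinh (dist D C) with hsDC
  set sBD := Real.sinh (dist B D) with hsBD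
  set sCA := Real.sinh (dist C A) with hsCA
  set sBE := Real.sinh (dist B E) with hsBE
  set sOE := Real.sinh (dist O E) with hsOE
  set sBO := Real.sinh (dist B O) with hsBO
  set sEA := Real.sinh (dist E A) with hsEA
  set sCE := Real.sinh (dist C E) with hsCE
  set sAB := Real.sinh (dist A B) with hsAB
  set sCF := Real.sinh (dist C F) with hsCF
  set sOF := Real.sinh (dist O F) with hsOF
  set sCO := Real.sinh (dist C O) with hsCO
  set sFB := Real.sinh (dist F B) with hsFB
  set sAF := Real.sinh (dist A F) with hsAF
  have pDC : 0 < sDC := Real.sinh_pos_iff.2 hdDC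
  have pBD : 0 < sBD := Real.sinh_pos_iff.2 hdBD
  have pCE : 0 < sCE := Real.sinh_pos_iff.2 hdCE
  have pEA : 0 < sEA := Real.sinh_pos_iff.2 hdEA
  have pAF : 0 < sAF := Real.sinh_pos_iff.2 hdAF
  have pFB : 0 < sFB := Real.sinh_pos_iff.2 hdFB
  have pAO : 0 < sAO := Real.sinh_pos_iff.2 hdAO
  have pBO : 0 < sBO := Real.sinh_pos_iff.2 hdBO
  have pCO : 0 < sCO := Real.sinh_pos_iff.2 hdCO
  have pCA : 0 < sCA := Real.sinh_pos_iff.2 hdCA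
  have pAB : 0 < sAB := Real.sinh_pos_iff.2 hdAB
  have pBE : 0 < sBE := Real.sinh_pos_iff.2 hdBE
  have pCF : 0 < sCF := Real.sinh_pos_iff.2 hdCF
  -- pair (A-cevian, B-cevian)
  obtain ⟨-, hb12, hc12⟩ := hindep hnd.1 hnd.2.1 hnd.2.2
    (α := (sCA * sBE) * (sBC * sOD) - (sBC * sAD) * (sBO * sCE))
    (β := (sCA * sBE) * (sAO * sDC) - (sBC * sAD) * (sCA * sOE))
    (γ := (sCA * sBE) * (sAO * sBD) - (sBC * sAD) * (sBO * sEA))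
    (by linear_combination (sBC * sAD) * eB0 - (sCA * sBE) * eA0)
    (by linear_combination (sBC * sAD) * eB1 - (sCA * sBE) * eA1)
    (by linear_combination (sBC * sAD) * eB2 - (sCA * sBE) * eA2)
  -- pair (B-cevian, C-cevian)
  obtain ⟨ha23, hb23, -⟩ := hindep hnd.1 hnd.2.1 hnd.2.2
    (α := (sAB * sCF) * (sBO * sCE) - (sCA * sBE) * (sCO * sFB))
    (β := (sAB * sCF) * (sCA * sOE) - (sCA * sBE) * (sCO * sAF))
    (γ := (sAB * sCF) * (sBO * sEA) - (sCA * sBE) * (sAB * sOF))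
    (by linear_combination (sCA * sBE) * eC0 - (sAB * sCF) * eB0)
    (by linear_combination (sCA * sBE) * eC1 - (sAB * sCF) * eB1)
    (by linear_combination (sCA * sBE) * eC2 - (sAB * sCF) * eB2)
  have k2ne : (sCA * sBE) ≠ 0 := (mul_pos pCA pBE).ne'
  have k3ne : (sAB * sCF) ≠ 0 := (mul_pos pAB pCF).ne'
  have m1 : (sAO * sDC) * (sBO * sEA) = (sAO * sBD) * (sCA * sOE) :=
    mul_left_cancel₀ k2ne (by linear_combination (sBO * sEA) * hb12 - (sCA * sOE) * hc12)
  have m2 : (sBO * sCE) * (sCO * sAF) = (sCO * sFB) * (sCA * sOE) :=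
    mul_left_cancel₀ k3ne (by linear_combination (sCO * sAF) * ha23 - (sCO * sFB) * hb23)
  have m1' : sDC * (sBO * sEA) = sBD * (sCA * sOE) :=
    mul_left_cancel₀ pAO.ne' (by linear_combination m1)
  have m2' : sBO * sCE * sAF = sFB * (sCA * sOE) :=
    mul_left_cancel₀ pCO.ne' (by linear_combination m2)
  have m3 : sBD * (sCE * sAF) = sDC * (sEA * sFB) :=
    mul_left_cancel₀ pBO.ne' (by linear_combination sBD * m2' - sFB * m1')
  rw [div_mul_div_comm, div_mul_div_comm, div_eq_one_iff_eq (by positivity)]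
  linear_combination m3
end

section
/- The area of a hyperbolic right triangle with fixed leg x and variable leg y is a strictly increasing function of y; explicitly, the area π/2 − (α+β) = arccos((cosh x · cosh y − 1)(cosh x + cosh y)/((cosh x · cosh y)² − 1)) is strictly increasing in y > 0. -/
open Real Set

/-- The area `arccos((cosh x cosh y − 1)(cosh x + cosh y)/((cosh x cosh y)² − 1))`
of a hyperbolic right triangle with fixed leg `x` is strictly increasing in the other
leg `y > 0`. -/
theorem area_strictMono_in_leg (x : ℝ) (hx : 0 < x) :
    StrictMonoOn (fun y : ℝ =>
      Real.arccos ((Real.cosh x * Real.cosh y - 1) * (Real.cosh x + Real.cosh y) /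
        ((Real.cosh x * Real.cosh y) ^ 2 - 1)))
      (Ioi (0 : ℝ)) := by
  have ha : 1 < Real.cosh x := Real.one_lt_cosh.mpr hx.ne'
  set a := Real.cosh x with ha_def
  -- simplification of the expression
  have key : ∀ y : ℝ, 1 < Real.cosh y →
      (a * Real.cosh y - 1) * (a + Real.cosh y) / ((a * Real.cosh y) ^ 2 - 1)
      = (a + Real.cosh y) / (a * Real.cosh y + 1) := by
    intro y hy
    have h1 : a * Real.cosh y - 1 ≠ 0 := by nlinarith
    have h2 : a * Real.cosh y + 1 ≠ 0 := by nlinarith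
    have hau : 1 < a * Real.cosh y := by nlinarith
    have h3 : (a * Real.cosh y) ^ 2 - 1 ≠ 0 := by nlinarith [mul_pos (sub_pos.mpr hau) (by linarith : (0:ℝ) < a * Real.cosh y + 1)]
    rw [div_eq_div_iff h3 h2]
    ring
  intro b hb c hc hbc
  have hcb : 1 < Real.cosh b := Real.one_lt_cosh.mpr (ne_of_gt hb)
  have hcc : 1 < Real.cosh c := Real.one_lt_cosh.mpr (ne_of_gt hc)
  have hcoshlt : Real.cosh b < Real.cosh c := by
    rw [Real.cosh_lt_cosh, abs_of_pos hb, abs_of_pos hc]; exact hbc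
  simp only [key b hcb, key c hcc]
  set u := Real.cosh b
  set v := Real.cosh c
  have hdu : (0:ℝ) < a * u + 1 := by nlinarith
  have hdv : (0:ℝ) < a * v + 1 := by nlinarith
  have hmemu : (a + u) / (a * u + 1) ∈ Icc (-1:ℝ) 1 := by
    constructor
    · have : (0:ℝ) ≤ (a + u) / (a * u + 1) := div_nonneg (by nlinarith) hdu.le
      linarith
    · rw [div_le_one hdu]; nlinarith
  have hmemv : (a + v) / (a * v + 1) ∈ Icc (-1:ℝ) 1 := by
    constructor
    · have : (0:ℝ) ≤ (a + v) / (a * v + 1) := div_nonneg (by nlinarith) hdv.le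
      linarith
    · rw [div_le_one hdv]; nlinarith
  have hlt : (a + v) / (a * v + 1) < (a + u) / (a * u + 1) := by
    rw [div_lt_div_iff₀ hdv hdu]
    nlinarith [mul_pos (sub_pos.mpr hcoshlt) (sub_pos.mpr (by nlinarith : (1:ℝ) < a^2))]
  exact Real.strictAntiOn_arccos hmemv hmemu hlt
end
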